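/- Let X = {X_z : z ∈ Z} and Y = {Y_z : z ∈ Z} be two finite families of integrable real random variables on a common probability space, with the family X independent of the family Y, and each Y_z centered (E Y_z = 0). Then E sup_{z∈Z} |X_z + Y_z| ≥ E sup_{z∈Z} |X_z|. -/

import Mathlib

open MeasureTheory ProbabilityTheory

lemma my_integrable_comp_fst {α β : Type*} [MeasurableSpace α] [MeasurableSpace β]
    {μ : Measure α} {ν : Measure β} [IsProbabilityMeasure μ] [IsProbabilityMeasure ν]
    {h : α → ℝ} (hm : Measurable h) (hh : Integrable h μ) :
    Integrable (fun p : α × β => h p.1) (μ.prod ν) := by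
  have h1 : Integrable h ((μ.prod ν).map Prod.fst) := by
    rwa [Measure.map_fst_prod, measure_univ, one_smul]
  exact (integrable_map_measure hm.aestronglyMeasurable measurable_fst.aemeasurable).1 h1

lemma my_integrable_comp_snd {α β : Type*} [MeasurableSpace α] [MeasurableSpace β]
    {μ : Measure α} {ν : Measure β} [IsProbabilityMeasure μ] [IsProbabilityMeasure ν]
    {h : β → ℝ} (hm : Measurable h) (hh : Integrable h ν) :
    Integrable (fun p : α × β => h p.2) (μ.prod ν) := by
  have h1 : Integrable h ((μ.prod ν).map Prod.snd) := by
    rwa [Measure.map_snd_prod, measure_univ, one_smul]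
  exact (integrable_map_measure hm.aestronglyMeasurable measurable_snd.aemeasurable).1 h1

/-- If the finite family `X` is independent of the finite family `Y` and every `Y_z` is
centered, then `E sup_z |X_z + Y_z| ≥ E sup_z |X_z|`. -/
theorem expectation_sup_lower_bound
    {Ω : Type*} [MeasurableSpace Ω] (P : Measure Ω) [IsProbabilityMeasure P]
    {Z : Type*} [Fintype Z] [Nonempty Z]
    (X Y : Z → Ω → ℝ)
    (hXint : ∀ z, Integrable (X z) P) (hYint : ∀ z, Integrable (Y z) P)
    (hindep : IndepFun (fun ω z => X z ω) (fun ω z => Y z ω) P)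
    (hcentered : ∀ z, ∫ ω, Y z ω ∂P = 0) :
    ∫ ω, ⨆ z, |X z ω| ∂P ≤ ∫ ω, ⨆ z, |X z ω + Y z ω| ∂P := by
  classical
  -- measurable modifications
  obtain ⟨X', hX'meas, hX'eq⟩ : ∃ X' : Z → Ω → ℝ, (∀ z, Measurable (X' z)) ∧
      ∀ z, X z =ᵐ[P] X' z :=
    ⟨fun z => (hXint z).1.mk (X z), fun z => (hXint z).1.measurable_mk,
      fun z => (hXint z).1.ae_eq_mk⟩
  obtain ⟨Y', hY'meas, hY'eq⟩ : ∃ Y' : Z → Ω → ℝ, (∀ z, Measurable (Y' z)) ∧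
      ∀ z, Y z =ᵐ[P] Y' z :=
    ⟨fun z => (hYint z).1.mk (Y z), fun z => (hYint z).1.measurable_mk,
      fun z => (hYint z).1.ae_eq_mk⟩
  have hX'int : ∀ z, Integrable (X' z) P := fun z => (hXint z).congr (hX'eq z)
  have hY'int : ∀ z, Integrable (Y' z) P := fun z => (hYint z).congr (hY'eq z)
  set f : Ω → Z → ℝ := fun ω z => X' z ω with hf_def
  set g : Ω → Z → ℝ := fun ω z => Y' z ω with hg_def
  have hf : Measurable f := measurable_pi_lambda _ hX'meas
  have hg : Measurable g := measurable_pi_lambda _ hY'meas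
  have hfeq : (fun ω z => X z ω) =ᵐ[P] f := by
    filter_upwards [ae_all_iff.2 hX'eq] with ω hω
    funext z; exact hω z
  have hgeq : (fun ω z => Y z ω) =ᵐ[P] g := by
    filter_upwards [ae_all_iff.2 hY'eq] with ω hω
    funext z; exact hω z
  have hindep' : IndepFun f g P := hindep.congr hfeq hgeq
  set μ : Measure (Z → ℝ) := P.map f with hμ_def
  set ν : Measure (Z → ℝ) := P.map g with hν_def
  have hμprob : IsProbabilityMeasure μ := Measure.isProbabilityMeasure_map hf.aemeasurable
  have hνprob : IsProbabilityMeasure ν := Measure.isProbabilityMeasure_map hg.aemeasurable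
  have hmap : P.map (fun ω => (f ω, g ω)) = μ.prod ν :=
    (indepFun_iff_map_prod_eq_prod_map_map hf.aemeasurable hg.aemeasurable).1 hindep'
  -- the two integrands on the product space
  set F : (Z → ℝ) × (Z → ℝ) → ℝ := fun p => ⨆ z, |p.1 z + p.2 z| with hF_def
  set G : (Z → ℝ) → ℝ := fun x => ⨆ z, |x z| with hG_def
  have hFmeas : Measurable F :=
    Measurable.iSup fun z =>
      (((measurable_pi_apply z).comp measurable_fst).add
        ((measurable_pi_apply z).comp measurable_snd)).abs
  have hGmeas : Measurable G := Measurable.iSup fun z => (measurable_pi_apply z).abs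
  -- integrability of coordinates under μ, ν
  have hcoordμ : ∀ z, Integrable (fun x : Z → ℝ => x z) μ := fun z =>
    (integrable_map_measure (measurable_pi_apply z).aestronglyMeasurable hf.aemeasurable).2
      (hX'int z)
  have hcoordν : ∀ z, Integrable (fun y : Z → ℝ => y z) ν := fun z =>
    (integrable_map_measure (measurable_pi_apply z).aestronglyMeasurable hg.aemeasurable).2
      (hY'int z)
  have hcenterν : ∀ z, ∫ y, y z ∂ν = 0 := by
    intro z
    rw [hν_def, integral_map hg.aemeasurable (measurable_pi_apply z).aestronglyMeasurable]
    calc ∫ ω, Y' z ω ∂P = ∫ ω, Y z ω ∂P := integral_congr_ae (hY'eq z).symm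
      _ = 0 := hcentered z
  -- integrability of F on the product
  have hbound : Integrable (fun p : (Z → ℝ) × (Z → ℝ) => ∑ z : Z, (|p.1 z| + |p.2 z|))
      (μ.prod ν) := by
    apply integrable_finset_sum
    intro z _
    exact (my_integrable_comp_fst (measurable_pi_apply z).abs (hcoordμ z).abs).add
      (my_integrable_comp_snd (measurable_pi_apply z).abs (hcoordν z).abs)
  have hFle : ∀ p : (Z → ℝ) × (Z → ℝ), F p ≤ ∑ z : Z, (|p.1 z| + |p.2 z|) := by
    intro p
    refine ciSup_le fun z => ?_
    calc |p.1 z + p.2 z| ≤ |p.1 z| + |p.2 z| := abs_add_le _ _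
      _ ≤ ∑ z : Z, (|p.1 z| + |p.2 z|) :=
        Finset.single_le_sum (f := fun z => |p.1 z| + |p.2 z|) (fun z _ => by positivity) (Finset.mem_univ z)
  have hFnonneg : ∀ p : (Z → ℝ) × (Z → ℝ), 0 ≤ F p := by
    intro p
    obtain ⟨z⟩ := ‹Nonempty Z›
    exact (abs_nonneg (p.1 z + p.2 z)).trans
      (le_ciSup (f := fun z => |p.1 z + p.2 z|) (Set.Finite.bddAbove (Set.finite_range _)) z)
  have hFint : Integrable F (μ.prod ν) := by
    refine hbound.mono' hFmeas.aestronglyMeasurable ?_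
    filter_upwards with p
    rw [Real.norm_eq_abs, abs_of_nonneg (hFnonneg p)]
    exact hFle p
  -- integrability of G on μ
  have hGint : Integrable G μ := by
    refine Integrable.mono' (g := fun x => ∑ z : Z, |x z|)
      (integrable_finset_sum _ fun z _ => (hcoordμ z).abs) hGmeas.aestronglyMeasurable ?_
    filter_upwards with x
    rw [Real.norm_eq_abs, abs_of_nonneg]
    · exact ciSup_le fun z =>
        Finset.single_le_sum (f := fun z => |x z|) (fun z _ => abs_nonneg _)
          (Finset.mem_univ z)
    · obtain ⟨z⟩ := ‹Nonempty Z›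
      exact (abs_nonneg (x z)).trans
        (le_ciSup (f := fun z => |x z|) (Set.Finite.bddAbove (Set.finite_range _)) z)
  -- pointwise integrability of F (x, ·)
  have hFxint : ∀ x : Z → ℝ, Integrable (fun y => F (x, y)) ν := by
    intro x
    refine Integrable.mono' (g := fun y => ∑ z : Z, (|x z| + |y z|))
      (integrable_finset_sum _ fun z _ =>
        (integrable_const _).add (hcoordν z).abs)
      ((hFmeas.comp measurable_prodMk_left).aestronglyMeasurable) ?_
    filter_upwards with y
    rw [Real.norm_eq_abs, abs_of_nonneg (hFnonneg (x, y))]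
    exact hFle (x, y)
  -- key pointwise estimate
  have hkey : ∀ x : Z → ℝ, G x ≤ ∫ y, F (x, y) ∂ν := by
    intro x
    refine ciSup_le fun z => ?_
    have h1 : Integrable (fun y : Z → ℝ => x z + y z) ν :=
      (integrable_const _).add (hcoordν z)
    have h2 : ∫ y, (x z + y z) ∂ν = x z := by
      rw [integral_add (integrable_const _) (hcoordν z), integral_const, hcenterν z,
        probReal_univ, smul_eq_mul, one_mul, add_zero]
    calc |x z| = |∫ y, (x z + y z) ∂ν| := by rw [h2]
      _ ≤ ∫ y, |x z + y z| ∂ν := by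
          simpa [Real.norm_eq_abs] using norm_integral_le_integral_norm (fun y : Z → ℝ => x z + y z) (μ := ν)
      _ ≤ ∫ y, F (x, y) ∂ν := by
          refine integral_mono h1.abs (hFxint x) fun y => ?_
          exact le_ciSup (f := fun z => |x z + y z|) (Set.Finite.bddAbove (Set.finite_range _)) z
  -- put everything together
  have hLHS : ∫ ω, ⨆ z, |X z ω| ∂P = ∫ x, G x ∂μ := by
    rw [hμ_def, integral_map hf.aemeasurable hGmeas.aestronglyMeasurable]
    refine integral_congr_ae ?_
    filter_upwards [hfeq] with ω hω
    exact congrArg (fun v : Z → ℝ => ⨆ z, |v z|) hω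
  have hRHS : ∫ ω, ⨆ z, |X z ω + Y z ω| ∂P = ∫ p, F p ∂(μ.prod ν) := by
    rw [← hmap, integral_map (hf.prodMk hg).aemeasurable hFmeas.aestronglyMeasurable]
    refine integral_congr_ae ?_
    filter_upwards [hfeq, hgeq] with ω hωf hωg
    simp only [hF_def]
    rw [← hωf, ← hωg]
  rw [hLHS, hRHS, integral_prod F hFint]
  exact integral_mono hGint hFint.integral_prod_left hkey
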